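/- With the hypotheses above, Σ_{i=1}^N y_i σ^β(x)_i ≤ y_1 + Σ_{i=2}^N (y_i − y_1)·exp(−β(x_1 − x_i)) + Σ_{i=2}^N |y_i − y_1|·exp(−β(x_1 − x_i))·(Σ_{j=2}^N exp(−β(x_1 − x_j))). -/
import Mathlib


/-- **Softmax-weighted average upper bound.** If `x 0 > x 1 > ... > x (N-1)`, `y i ≥ 0`,
and `β > 0`, then
`∑ i, y i · σ^β(x)_i ≤ y 0 + ∑_{i ≠ 0} (y i − y 0)·exp(−β(x 0 − x i))
  + ∑_{i ≠ 0} |y i − y 0|·exp(−β(x 0 − x i))·(∑_{j ≠ 0} exp(−β(x 0 − x j)))`. -/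
theorem softmax_average_upper_bound (N : ℕ) (hN : 2 ≤ N) (x y : Fin N → ℝ)
    (hx : StrictAnti x) (hy : ∀ i, 0 ≤ y i) (β : ℝ) (hβ : 0 < β) :
    (∑ i, y i * (Real.exp (β * x i) / (∑ j, Real.exp (β * x j))))
      ≤ y ⟨0, by omega⟩
        + (∑ i ∈ Finset.univ.erase (⟨0, by omega⟩ : Fin N),
            (y i - y ⟨0, by omega⟩) * Real.exp (-β * (x ⟨0, by omega⟩ - x i)))
        + (∑ i ∈ Finset.univ.erase (⟨0, by omega⟩ : Fin N),
            |y i - y ⟨0, by omega⟩| * Real.exp (-β * (x ⟨0, by omega⟩ - x i)) *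
              (∑ j ∈ Finset.univ.erase (⟨0, by omega⟩ : Fin N),
                Real.exp (-β * (x ⟨0, by omega⟩ - x j)))) := by
  set i0 : Fin N := ⟨0, by omega⟩ with hi0
  set e : Fin N → ℝ := fun i => Real.exp (-β * (x i0 - x i)) with he
  have he0 : e i0 = 1 := by simp [he]
  have hepos : ∀ i, 0 < e i := fun i => Real.exp_pos _
  set E := ∑ j ∈ Finset.univ.erase i0, e j with hE
  have hEnn : 0 ≤ E := Finset.sum_nonneg fun i _ => (hepos i).le
  have hT : ∑ j, e j = 1 + E := by
    rw [← Finset.add_sum_erase _ _ (Finset.mem_univ i0), he0]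
  have hTpos : (0:ℝ) < 1 + E := by linarith
  have hej : ∀ j, e j = Real.exp (β * x j) * Real.exp (-(β * x i0)) := by
    intro j; rw [he, ← Real.exp_add]; ring_nf
  have hratio : ∀ i, Real.exp (β * x i) / (∑ j, Real.exp (β * x j)) = e i / (1 + E) := by
    intro i
    have hsum : ∑ j, e j = (∑ j, Real.exp (β * x j)) * Real.exp (-(β * x i0)) := by
      rw [Finset.sum_mul]; exact Finset.sum_congr rfl fun j _ => hej j
    rw [← hT, hej i, hsum, mul_div_mul_right _ _ (Real.exp_ne_zero _)]
  set A := ∑ i ∈ Finset.univ.erase i0, (y i - y i0) * e i with hA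
  set B := ∑ i ∈ Finset.univ.erase i0, |y i - y i0| * e i with hB
  have hBnn : 0 ≤ B := Finset.sum_nonneg fun i _ =>
    mul_nonneg (abs_nonneg _) (hepos i).le
  have hAB : |A| ≤ B := by
    refine (Finset.abs_sum_le_sum_abs _ _).trans (le_of_eq ?_)
    refine Finset.sum_congr rfl fun i _ => ?_
    rw [abs_mul, abs_of_pos (hepos i)]
  have hLHS : (∑ i, y i * (Real.exp (β * x i) / (∑ j, Real.exp (β * x j))))
      = y i0 + A / (1 + E) := by
    have h1 : (∑ i, y i * (Real.exp (β * x i) / (∑ j, Real.exp (β * x j))))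
        = (∑ i, y i * e i) / (1 + E) := by
      rw [Finset.sum_div]
      exact Finset.sum_congr rfl fun i _ => by rw [hratio i, mul_div_assoc]
    have h2 : ∑ i, y i * e i = y i0 * (1 + E) + A := by
      rw [← hT, Finset.mul_sum]
      have h3 : ∀ i ∈ Finset.univ, y i * e i = y i0 * e i + (y i - y i0) * e i :=
        fun i _ => by ring
      rw [Finset.sum_congr rfl h3, Finset.sum_add_distrib]
      congr 1
      rw [← Finset.add_sum_erase _ (fun i => (y i - y i0) * e i) (Finset.mem_univ i0), hA]
      simp
    rw [h1, h2, add_div, mul_div_cancel_right₀ _ (ne_of_gt hTpos)]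
  rw [hLHS]
  have hgoal : A / (1 + E) ≤ A + B * E := by
    rw [div_le_iff₀ hTpos]
    nlinarith [mul_nonneg hEnn (by linarith [neg_abs_le A] : (0:ℝ) ≤ A + B),
      mul_nonneg (mul_nonneg hBnn hEnn) hEnn]
  calc y i0 + A / (1 + E) ≤ y i0 + (A + B * E) := by linarith
    _ = y i0 + A + B * E := by ring
    _ = _ := by rw [hB, Finset.sum_mul]
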